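/- arXiv:1203.4204 — 2 statements merged into one kernel-verified Lean document; each statement's English description precedes it below -/
import Mathlib

section
/- Let $m \geq 1$ and $B$ be positive integers, and let $w_1, \ldots, w_{3m}$ be positive integers with $B/4 < w_i < B/2$ for all $i$ and $\sum_i w_i = mB$. Let $t > 7m$ and let $T$ be the star tree with center $x$ of weight $1$ and leaves $x_1,\ldots,x_{3m}$ of weights $w_i + B + 1$, $y_1,\ldots,y_m$ of weight $1$, and $z_1,\ldots,z_t$ of weight $B+1$, all edge weights $1$ and zero potential. Then for $k = m + t$, $\mathrm{MISO}_k(T) = 1/(B+1)$. -/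
open Finset

variable {V : Type*} [Fintype V] [DecidableEq V]

/-- Total flow (sum of edge weights) between two vertex sets. -/
noncomputable def flowBetween (G : SimpleGraph V) [DecidableRel G.Adj]
    (φ : V → V → ℝ) (A B : Finset V) : ℝ :=
  ∑ x ∈ A, ∑ y ∈ B, if G.Adj x y then φ x y else 0

/-- `φ(∂A)`: the total flow across the boundary of `A`. -/
noncomputable def bdryFlow (G : SimpleGraph V) [DecidableRel G.Adj]
    (φ : V → V → ℝ) (A : Finset V) : ℝ :=
  flowBetween G φ A Aᶜ

/-- The normalized flow `(φ(∂A) + p(A)) / ω(A)` of a set `A`. -/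
noncomputable def nflow (G : SimpleGraph V) [DecidableRel G.Adj]
    (ω : V → ℝ) (φ : V → V → ℝ) (p : V → ℝ) (A : Finset V) : ℝ :=
  (bdryFlow G φ A + ∑ x ∈ A, p x) / ∑ x ∈ A, ω x

/-- A `k`-subpartition: `k` nonempty pairwise disjoint subsets. -/
def IsSubpartition {k : ℕ} (𝒜 : Fin k → Finset V) : Prop :=
  (∀ i, (𝒜 i).Nonempty) ∧ ∀ i j, i ≠ j → Disjoint (𝒜 i) (𝒜 j)

/-- The (max-version) cost of a family of sets. -/
noncomputable def cost (G : SimpleGraph V) [DecidableRel G.Adj]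
    (ω : V → ℝ) (φ : V → V → ℝ) (p : V → ℝ) {k : ℕ} (𝒜 : Fin k → Finset V) : ℝ :=
  ⨆ i, nflow G ω φ p (𝒜 i)

/-- `MISO_k(G)`: minimum cost over `k`-subpartitions. -/
noncomputable def MISO (G : SimpleGraph V) [DecidableRel G.Adj]
    (ω : V → ℝ) (φ : V → V → ℝ) (p : V → ℝ) (k : ℕ) : ℝ :=
  sInf {c | ∃ 𝒜 : Fin k → Finset V, IsSubpartition 𝒜 ∧ c = cost G ω φ p 𝒜}

/-- `MNC_k(G)`: minimum cost over `k`-partitions. -/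
noncomputable def MNC (G : SimpleGraph V) [DecidableRel G.Adj]
    (ω : V → ℝ) (φ : V → V → ℝ) (p : V → ℝ) (k : ℕ) : ℝ :=
  sInf {c | ∃ 𝒜 : Fin k → Finset V, IsSubpartition 𝒜 ∧ (∀ x, ∃ i, x ∈ 𝒜 i) ∧
    c = cost G ω φ p 𝒜}

/-- The star graph on `Option α` with center `none`. -/
def starGraph (α : Type*) : SimpleGraph (Option α) where
  Adj u v := u ≠ v ∧ (u = none ∨ v = none)
  symm := ⟨fun u v ⟨h1, h2⟩ => ⟨h1.symm, h2.symm⟩⟩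
  loopless := ⟨fun u ⟨h, _⟩ => h rfl⟩

instance {α : Type*} [DecidableEq α] : DecidableRel (starGraph α).Adj :=
  fun u v => inferInstanceAs (Decidable (u ≠ v ∧ (u = none ∨ v = none)))

/-- Vertex type of the star tree in the 3-PARTITION reduction:
center `none`, leaves `x_i` (`Sum.inl`), `y_j` (`Sum.inr (Sum.inl _)`) and
`z_l` (`Sum.inr (Sum.inr _)`). -/
abbrev starV (m t : ℕ) := Option (Fin (3 * m) ⊕ (Fin m ⊕ Fin t))

/-- Vertex weights of the star tree of the 3-PARTITION reduction. -/
noncomputable def starW (m t B : ℕ) (w : Fin (3 * m) → ℕ) : starV m t → ℝ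
  | none => 1
  | some (Sum.inl i) => (w i : ℝ) + B + 1
  | some (Sum.inr (Sum.inl _)) => 1
  | some (Sum.inr (Sum.inr _)) => (B : ℝ) + 1


section AuxMISO

/-- Decode map collapsing the `z` leaves; injective on non-`z` vertices. -/
def starDecode (m₀ m₁ t₀ : ℕ) :
    Option (Fin m₀ ⊕ (Fin m₁ ⊕ Fin t₀)) → Option (Fin m₀ ⊕ Fin m₁)
  | none => none
  | some (Sum.inl j) => some (Sum.inl j)
  | some (Sum.inr (Sum.inl j)) => some (Sum.inr j)
  | some (Sum.inr (Sum.inr _)) => none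

lemma star_bdry_eq_card {α : Type*} [Fintype α] [DecidableEq α]
    (A : Finset (Option α)) (hA : none ∉ A) :
    bdryFlow (starGraph α) (fun _ _ => (1:ℝ)) A = A.card := by
  have h : ∀ x ∈ A, (∑ y ∈ Aᶜ, if (starGraph α).Adj x y then (1:ℝ) else 0) = 1 := by
    intro x hx
    obtain ⟨a, rfl⟩ : ∃ a, x = some a := by
      cases x with
      | none => exact absurd hx hA
      | some a => exact ⟨a, rfl⟩
    have hadj : ∀ y : Option α, (starGraph α).Adj (some a) y ↔ y = none := by
      intro y
      constructor
      · rintro ⟨h1, h2 | h2⟩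
        · exact absurd h2 (by simp)
        · exact h2
      · rintro rfl
        exact ⟨by simp, Or.inr rfl⟩
    calc (∑ y ∈ Aᶜ, if (starGraph α).Adj (some a) y then (1:ℝ) else 0)
        = ∑ y ∈ Aᶜ, if y = none then (1:ℝ) else 0 :=
          Finset.sum_congr rfl fun y _ => by simp only [hadj]
      _ = 1 := by
          rw [Finset.sum_ite_eq' Aᶜ none fun _ => (1:ℝ)]
          simp [hA]
  unfold bdryFlow flowBetween
  rw [Finset.sum_congr rfl h, Finset.sum_const, nsmul_eq_mul, mul_one]

lemma one_le_starW (m t B : ℕ) (w : Fin (3*m) → ℕ) (v : starV m t) :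
    (1:ℝ) ≤ starW m t B w v := by
  rcases v with _ | (j | (j | l))
  · simp [starW]
  · show (1:ℝ) ≤ (w j : ℝ) + B + 1
    have h1 : (0:ℝ) ≤ (w j : ℝ) := Nat.cast_nonneg _
    have h2 : (0:ℝ) ≤ (B : ℝ) := Nat.cast_nonneg _
    linarith
  · simp [starW]
  · show (1:ℝ) ≤ (B : ℝ) + 1
    have h2 : (0:ℝ) ≤ (B : ℝ) := Nat.cast_nonneg _
    linarith

lemma nflow_z (m t B : ℕ) (w : Fin (3*m) → ℕ) (A : Finset (starV m t))
    (hne : A.Nonempty) (hz : ∀ v ∈ A, ∃ l : Fin t, v = some (Sum.inr (Sum.inr l))) :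
    nflow (starGraph (Fin (3*m) ⊕ (Fin m ⊕ Fin t))) (starW m t B w)
      (fun _ _ => 1) (fun _ => 0) A = 1 / ((B:ℝ) + 1) := by
  have hnone : (none : starV m t) ∉ A := fun h => by
    obtain ⟨l, hl⟩ := hz none h
    cases hl
  have hω : ∑ x ∈ A, starW m t B w x = (A.card : ℝ) * ((B:ℝ) + 1) := by
    rw [Finset.sum_congr rfl (fun x hx => ?_), Finset.sum_const, nsmul_eq_mul]
    obtain ⟨l, rfl⟩ := hz x hx
    rfl
  have hc : ((A.card : ℝ)) ≠ 0 := by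
    exact_mod_cast (Finset.card_pos.mpr hne).ne'
  unfold nflow
  rw [star_bdry_eq_card A hnone, hω]
  simp only [Finset.sum_const_zero, add_zero]
  rw [← div_div, div_self hc]

lemma nflow_star_singleton (m t B : ℕ) (w : Fin (3*m) → ℕ)
    (a : Fin (3*m) ⊕ (Fin m ⊕ Fin t)) :
    nflow (starGraph (Fin (3*m) ⊕ (Fin m ⊕ Fin t))) (starW m t B w)
      (fun _ _ => 1) (fun _ => 0) {some a} = 1 / starW m t B w (some a) := by
  unfold nflow
  rw [star_bdry_eq_card _ (by simp)]
  simp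

lemma nflow_star_le_bound (m t B : ℕ) (w : Fin (3*m) → ℕ) (A : Finset (starV m t))
    (hne : A.Nonempty) :
    nflow (starGraph (Fin (3*m) ⊕ (Fin m ⊕ Fin t))) (starW m t B w)
        (fun _ _ => 1) (fun _ => 0) A
      ≤ (Fintype.card (starV m t) : ℝ) * Fintype.card (starV m t) := by
  have hb0 : (0:ℝ) ≤ bdryFlow (starGraph (Fin (3*m) ⊕ (Fin m ⊕ Fin t)))
      (fun _ _ => (1:ℝ)) A := by
    unfold bdryFlow flowBetween
    apply Finset.sum_nonneg; intro x _
    apply Finset.sum_nonneg; intro y _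
    split <;> norm_num
  have hbN : bdryFlow (starGraph (Fin (3*m) ⊕ (Fin m ⊕ Fin t))) (fun _ _ => (1:ℝ)) A
      ≤ (Fintype.card (starV m t) : ℝ) * Fintype.card (starV m t) := by
    unfold bdryFlow flowBetween
    calc (∑ x ∈ A, ∑ y ∈ Aᶜ,
            if (starGraph (Fin (3*m) ⊕ (Fin m ⊕ Fin t))).Adj x y then (1:ℝ) else 0)
        ≤ ∑ x ∈ A, ∑ y ∈ Aᶜ, (1:ℝ) := by
          apply Finset.sum_le_sum; intro x _
          apply Finset.sum_le_sum; intro y _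
          split <;> norm_num
      _ = (A.card : ℝ) * (Aᶜ.card : ℝ) := by
          simp [Finset.sum_const, mul_comm]
      _ ≤ _ := by
          have h1 : (A.card : ℝ) ≤ Fintype.card (starV m t) := by
            exact_mod_cast Finset.card_le_univ A
          have h2 : ((Aᶜ.card : ℕ) : ℝ) ≤ Fintype.card (starV m t) := by
            exact_mod_cast Finset.card_le_univ Aᶜ
          exact mul_le_mul h1 h2 (Nat.cast_nonneg _) (Nat.cast_nonneg _)
  have hω : (1:ℝ) ≤ ∑ x ∈ A, starW m t B w x := by
    obtain ⟨v, hv⟩ := hne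
    calc (1:ℝ) ≤ starW m t B w v := one_le_starW m t B w v
      _ ≤ ∑ x ∈ A, starW m t B w x :=
          Finset.single_le_sum
            (fun x _ => le_trans zero_le_one (one_le_starW m t B w x)) hv
  unfold nflow
  simp only [Finset.sum_const_zero, add_zero]
  exact le_trans (div_le_self hb0 hω) hbN

end AuxMISO

/-- In the 3-PARTITION reduction, the star tree has
`MISO_{m+t}(T) = 1/(B+1)`. -/
theorem MISO_starTree (m B t : ℕ) (hm : 1 ≤ m) (hB : 1 ≤ B) (ht : 7 * m < t)
    (w : Fin (3 * m) → ℕ)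
    (hw : ∀ i, B < 4 * w i ∧ 2 * w i < B)
    (hsum : ∑ i, w i = m * B) :
    MISO (starGraph (Fin (3 * m) ⊕ (Fin m ⊕ Fin t))) (starW m t B w)
        (fun _ _ => 1) (fun _ => 0) (m + t)
      = 1 / ((B : ℝ) + 1) := by
  have hm3 : m ≤ 3*m := by omega
  have htpos : 0 < t := by omega
  have hBpos : (0:ℝ) < (B:ℝ) + 1 := by positivity
  -- the witness subpartition: m singletons among the x's and the t z-singletons
  set f : Fin m ⊕ Fin t → starV m t :=
    Sum.elim (fun j => some (Sum.inl (Fin.castLE hm3 j)))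
             (fun l => some (Sum.inr (Sum.inr l))) with hf
  have hf_inj : Function.Injective f := by
    rintro (j | l) (j' | l') h <;>
      simp only [hf, Sum.elim_inl, Sum.elim_inr, Option.some.injEq,
        Sum.inl.injEq, Sum.inr.injEq] at h
    · exact congrArg Sum.inl (Fin.castLE_injective hm3 h)
    · exact absurd h (by simp)
    · exact absurd h (by simp)
    · exact congrArg Sum.inr h
  set 𝒜₀ : Fin (m+t) → Finset (starV m t) := fun i => {f (finSumFinEquiv.symm i)}
    with h𝒜₀
  have hsub₀ : IsSubpartition 𝒜₀ := by
    refine ⟨fun i => Finset.singleton_nonempty _, fun i j hij => ?_⟩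
    simp only [h𝒜₀, Finset.disjoint_singleton]
    intro h
    exact hij (finSumFinEquiv.symm.injective (hf_inj h))
  have hval : ∀ i, nflow (starGraph (Fin (3 * m) ⊕ (Fin m ⊕ Fin t)))
      (starW m t B w) (fun _ _ => 1) (fun _ => 0) (𝒜₀ i) ≤ 1 / ((B:ℝ)+1) := by
    intro i
    rcases hsym : finSumFinEquiv.symm i with j | l
    · have h1 : 𝒜₀ i = {some (Sum.inl (Fin.castLE hm3 j))} := by
        simp only [h𝒜₀]; rw [hsym]; rfl
      rw [h1, nflow_star_singleton]
      apply one_div_le_one_div_of_le hBpos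
      show (B:ℝ) + 1 ≤ (w (Fin.castLE hm3 j) : ℝ) + B + 1
      have : (0:ℝ) ≤ (w (Fin.castLE hm3 j) : ℝ) := Nat.cast_nonneg _
      linarith
    · have h1 : 𝒜₀ i = {some (Sum.inr (Sum.inr l))} := by
        simp only [h𝒜₀]; rw [hsym]; rfl
      rw [h1, nflow_star_singleton]
      exact le_of_eq rfl
  have hcost₀ : cost (starGraph (Fin (3 * m) ⊕ (Fin m ⊕ Fin t)))
      (starW m t B w) (fun _ _ => 1) (fun _ => 0) 𝒜₀ = 1/((B:ℝ)+1) := by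
    have hne : Nonempty (Fin (m+t)) := ⟨⟨0, by omega⟩⟩
    apply le_antisymm
    · exact ciSup_le hval
    · have hA : 𝒜₀ (finSumFinEquiv (Sum.inr ⟨0, htpos⟩))
          = {some (Sum.inr (Sum.inr ⟨0, htpos⟩))} := by
        simp only [h𝒜₀]; rw [Equiv.symm_apply_apply]; rfl
      have hv : nflow (starGraph (Fin (3 * m) ⊕ (Fin m ⊕ Fin t)))
          (starW m t B w) (fun _ _ => 1) (fun _ => 0)
          (𝒜₀ (finSumFinEquiv (Sum.inr ⟨0, htpos⟩))) = 1/((B:ℝ)+1) := by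
        rw [hA, nflow_star_singleton]
        rfl
      rw [← hv]
      exact le_ciSup ⟨1/((B:ℝ)+1), by rintro x ⟨i, rfl⟩; exact hval i⟩ _
  have hlower : ∀ c ∈ {c | ∃ 𝒜 : Fin (m+t) → Finset (starV m t),
      IsSubpartition 𝒜 ∧ c = cost (starGraph (Fin (3 * m) ⊕ (Fin m ⊕ Fin t)))
        (starW m t B w) (fun _ _ => 1) (fun _ => 0) 𝒜},
      1/((B:ℝ)+1) ≤ c := by
    rintro c ⟨𝒜, ⟨hne, hdisj⟩, rfl⟩
    have hexists : ∃ i, ∀ v ∈ 𝒜 i, ∃ l : Fin t, v = some (Sum.inr (Sum.inr l)) := by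
      by_contra hcon
      push_neg at hcon
      choose g hg1 hg2 using hcon
      have hinj : Function.Injective (fun i => starDecode (3*m) m t (g i)) := by
        intro i j hij2'
        have hij2 : starDecode (3*m) m t (g i) = starDecode (3*m) m t (g j) := hij2'
        by_contra hne2
        have hgi := hg2 i
        have hgj := hg2 j
        have hgij : g i = g j := by
          rcases hgi' : g i with _ | (a | (a | a)) <;>
            rcases hgj' : g j with _ | (b | (b | b)) <;>
            rw [hgi', hgj'] at hij2 <;>
            simp_all [starDecode]
        have hd := hdisj i j hne2
        exact (Finset.disjoint_left.mp hd (hg1 i)) (hgij ▸ hg1 j)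
      have hcard := Fintype.card_le_of_injective _ hinj
      simp only [Fintype.card_fin, Fintype.card_option, Fintype.card_sum] at hcard
      omega
    obtain ⟨i, hi⟩ := hexists
    have heq := nflow_z m t B w (𝒜 i) (hne i) hi
    rw [← heq]
    unfold cost
    exact le_ciSup ⟨(Fintype.card (starV m t) : ℝ) * Fintype.card (starV m t),
      by rintro x ⟨j, rfl⟩; exact nflow_star_le_bound m t B w (𝒜 j) (hne j)⟩ i
  unfold MISO
  apply le_antisymm
  · apply csInf_le ⟨1/((B:ℝ)+1), fun c hc => hlower c hc⟩
    exact ⟨𝒜₀, hsub₀, hcost₀.symm⟩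
  · exact le_csInf ⟨_, 𝒜₀, hsub₀, rfl⟩ hlower
end

section
/- With the star tree $T$, $k = m+t$ and notation of the 3-PARTITION reduction above, if a minimizing $k$-subpartition $\mathcal{B}$ achieving $\mathrm{MISO}_k(T) = 1/(B+1)$ has residue number at most $1$, then there exists a partition $\{S_1,\ldots,S_m\}$ of $\{1,\ldots,3m\}$ with $\sum_{i \in S_j} w_i = B$ for every $j$. -/
open Finset

variable {V : Type*} [Fintype V] [DecidableEq V]

section Aux
variable {α : Type*} [DecidableEq α] [Fintype α]

lemma starAdj_some_iff (a : α) (v : Option α) :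
    (starGraph α).Adj (some a) v ↔ v = none := by
  constructor
  · rintro ⟨h1, h2 | h2⟩
    · exact absurd h2 (by simp)
    · exact h2
  · rintro rfl; exact ⟨by simp, Or.inr rfl⟩

lemma starAdj_none_iff (v : Option α) :
    (starGraph α).Adj none v ↔ v ≠ none := by
  constructor
  · rintro ⟨h1, _⟩; exact fun h => h1 h.symm
  · intro h; exact ⟨fun h' => h h'.symm, Or.inl rfl⟩

lemma bdryFlow_of_not_mem (A : Finset (Option α)) (hA : none ∉ A) :
    bdryFlow (starGraph α) (fun _ _ => (1:ℝ)) A = A.card := by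
  unfold bdryFlow flowBetween
  have h : ∀ x ∈ A, (∑ y ∈ Aᶜ, if (starGraph α).Adj x y then (1:ℝ) else 0) = 1 := by
    intro x hx
    obtain ⟨a, rfl⟩ : ∃ a, x = some a := by
      cases x with
      | none => exact absurd hx hA
      | some a => exact ⟨a, rfl⟩
    simp only [starAdj_some_iff]
    rw [Finset.sum_ite_eq' Aᶜ none (fun _ => (1:ℝ)), if_pos (Finset.mem_compl.2 hA)]
  rw [Finset.sum_congr rfl h, Finset.sum_const, nsmul_eq_mul, mul_one]

lemma bdryFlow_of_mem (A : Finset (Option α)) (hA : none ∈ A) :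
    bdryFlow (starGraph α) (fun _ _ => (1:ℝ)) A = Aᶜ.card := by
  unfold bdryFlow flowBetween
  rw [← Finset.add_sum_erase _ _ hA]
  have h1 : (∑ y ∈ Aᶜ, if (starGraph α).Adj none y then (1:ℝ) else 0) = Aᶜ.card := by
    rw [Finset.sum_congr rfl (fun y hy => if_pos ?_), Finset.sum_const, nsmul_eq_mul, mul_one]
    rw [starAdj_none_iff]
    rintro rfl; exact (Finset.mem_compl.1 hy) hA
  have h2 : ∀ x ∈ A.erase none, (∑ y ∈ Aᶜ, if (starGraph α).Adj x y then (1:ℝ) else 0) = 0 := by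
    intro x hx
    obtain ⟨a, rfl⟩ : ∃ a, x = some a := by
      cases x with
      | none => exact absurd rfl (Finset.ne_of_mem_erase hx)
      | some a => exact ⟨a, rfl⟩
    simp only [starAdj_some_iff]
    rw [Finset.sum_ite_eq' Aᶜ none (fun _ => (1:ℝ)), if_neg (by simp [hA])]
  rw [Finset.sum_congr rfl h2, Finset.sum_const_zero, h1, add_zero]

end Aux
section Decomp
variable {m t : ℕ}

/-- indices of x-leaves in A -/
def XsF (m t : ℕ) (A : Finset (starV m t)) : Finset (Fin (3*m)) :=
  Finset.univ.filter (fun i => some (Sum.inl i) ∈ A)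
def YsF (m t : ℕ) (A : Finset (starV m t)) : Finset (Fin m) :=
  Finset.univ.filter (fun j => some (Sum.inr (Sum.inl j)) ∈ A)
def ZsF (m t : ℕ) (A : Finset (starV m t)) : Finset (Fin t) :=
  Finset.univ.filter (fun l => some (Sum.inr (Sum.inr l)) ∈ A)

lemma sum_decomp {M : Type*} [AddCommMonoid M]
    (A : Finset (starV m t)) (hA : none ∉ A) (f : starV m t → M) :
    ∑ x ∈ A, f x =
      (∑ i ∈ XsF m t A, f (some (Sum.inl i))) +
      (∑ j ∈ YsF m t A, f (some (Sum.inr (Sum.inl j)))) +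
      (∑ l ∈ ZsF m t A, f (some (Sum.inr (Sum.inr l)))) := by
  have h : ∑ x ∈ A, f x = ∑ x : starV m t, if x ∈ A then f x else 0 := by
    rw [Finset.sum_ite_mem, Finset.univ_inter]
  rw [h, Fintype.sum_option, Fintype.sum_sum_type, Fintype.sum_sum_type,
    if_neg hA, zero_add, XsF, YsF, ZsF,
    Finset.sum_filter, Finset.sum_filter, Finset.sum_filter, add_assoc]

lemma card_decomp (A : Finset (starV m t)) (hA : none ∉ A) :
    A.card = (XsF m t A).card + (YsF m t A).card + (ZsF m t A).card := by
  have := sum_decomp A hA (fun _ => (1:ℕ))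
  simpa using this

end Decomp
/-- If a minimizing `(m+t)`-subpartition of the star tree achieving
`MISO = 1/(B+1)` has residue number at most `1`, then the 3-PARTITION
instance has a solution. -/
theorem starTree_residue_le_one_implies_threePartition
    (m B t : ℕ) (hm : 1 ≤ m) (hB : 1 ≤ B) (ht : 7 * m < t)
    (w : Fin (3 * m) → ℕ)
    (hw : ∀ i, B < 4 * w i ∧ 2 * w i < B)
    (hsum : ∑ i, w i = m * B)
    (𝒜 : Fin (m + t) → Finset (starV m t))
    (h𝒜 : IsSubpartition 𝒜)
    (hmiso : MISO (starGraph (Fin (3 * m) ⊕ (Fin m ⊕ Fin t))) (starW m t B w)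
        (fun _ _ => 1) (fun _ => 0) (m + t) = 1 / ((B : ℝ) + 1))
    (hach : cost (starGraph (Fin (3 * m) ⊕ (Fin m ⊕ Fin t))) (starW m t B w)
        (fun _ _ => 1) (fun _ => 0) 𝒜 = 1 / ((B : ℝ) + 1))
    (hres : ((Finset.univ : Finset (starV m t)) \ Finset.univ.biUnion 𝒜).card ≤ 1) :
    ∃ S : Fin m → Finset (Fin (3 * m)),
      (∀ j j', j ≠ j' → Disjoint (S j) (S j')) ∧
      (∀ i, ∃ j, i ∈ S j) ∧
      ∀ j, ∑ i ∈ S j, w i = B := by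
  set α := Fin (3 * m) ⊕ (Fin m ⊕ Fin t) with hα
  set ω := starW m t B w with hω
  -- positivity of weights
  have hωpos : ∀ v : starV m t, 0 < ω v := by
    rintro (_ | (i | (j | l))) <;> simp [hω, starW] <;> positivity
  have hωsum_pos : ∀ A : Finset (starV m t), A.Nonempty → 0 < ∑ x ∈ A, ω x :=
    fun A hA => Finset.sum_pos (fun x _ => hωpos x) hA
  -- per-part normalized flow bound
  have hle : ∀ i, nflow (starGraph α) ω (fun _ _ => 1) (fun _ => 0) (𝒜 i) ≤ 1 / ((B:ℝ)+1) := by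
    intro i
    rw [← hach]
    unfold cost
    exact le_ciSup (f := fun i => nflow (starGraph α) ω (fun _ _ => (1:ℝ)) (fun _ => (0:ℝ)) (𝒜 i))
      (Set.Finite.bddAbove (Set.finite_range _)) i
  have hB1 : (0:ℝ) < (B:ℝ) + 1 := by positivity
  have key : ∀ i, ((B:ℝ)+1) * bdryFlow (starGraph α) (fun _ _ => 1) (𝒜 i)
      ≤ ∑ x ∈ 𝒜 i, ω x := by
    intro i
    have h := hle i
    unfold nflow at h
    rw [Finset.sum_const_zero, add_zero] at h
    have hpos := hωsum_pos (𝒜 i) (h𝒜.1 i)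
    rw [div_le_div_iff₀ hpos hB1, one_mul] at h
    linarith [h]
  -- total weight
  have hxsum : ∑ i : Fin (3*m), ((w i:ℝ) + B + 1) = m*B + 3*m*((B:ℝ)+1) := by
    rw [Finset.sum_add_distrib, Finset.sum_add_distrib, Finset.sum_const, Finset.sum_const,
      Finset.card_univ, Fintype.card_fin, ← Nat.cast_sum, hsum]
    push_cast; ring
  have htot : ∑ x : starV m t, ω x = 1 + (4*m+t)*((B:ℝ)+1) := by
    rw [hω, Fintype.sum_option, Fintype.sum_sum_type, Fintype.sum_sum_type]
    simp only [starW]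
    rw [hxsum, Finset.sum_const, Finset.sum_const, Finset.card_univ, Finset.card_univ,
      Fintype.card_fin, Fintype.card_fin]
    push_cast; ring
  -- disjointness helper
  have hdisj : (↑(Finset.univ : Finset (Fin (m+t))) : Set (Fin (m+t))).PairwiseDisjoint 𝒜 :=
    fun i _ j _ hij => h𝒜.2 i j hij
  have hsum_le : ∑ i, ∑ x ∈ 𝒜 i, ω x ≤ 1 + (4*m+t)*((B:ℝ)+1) := by
    rw [← Finset.sum_biUnion hdisj, ← htot]
    exact Finset.sum_le_sum_of_subset_of_nonneg (Finset.subset_univ _)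
      (fun x _ _ => (hωpos x).le)
  -- cardinality of the union
  have hcardV : Fintype.card (starV m t) = 4*m+t+1 := by
    simp [starV]; omega
  have hUcard : 4*m+t ≤ ∑ i, (𝒜 i).card := by
    rw [← Finset.card_biUnion (fun i _ j _ hij => h𝒜.2 i j hij)]
    have h1 := Finset.card_sdiff_add_card_eq_card
      (Finset.subset_univ (Finset.univ.biUnion 𝒜))
    rw [Finset.card_univ, hcardV] at h1
    omega
  -- Step 1: the center is in no part
  have hCle : ∑ i, (𝒜 i).card ≤ 4*m+t+1 := by
    rw [← Finset.card_biUnion (fun i _ j _ hij => h𝒜.2 i j hij)]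
    have := Finset.card_le_univ (Finset.univ.biUnion 𝒜)
    rwa [hcardV] at this
  have hnone : ∀ i, none ∉ 𝒜 i := by
    by_contra hcon
    push_neg at hcon
    obtain ⟨i0, hin⟩ := hcon
    have hothers : ∀ i, i ≠ i0 → none ∉ 𝒜 i := by
      intro i hi hmem
      exact Finset.disjoint_left.1 (h𝒜.2 i i0 hi) hmem hin
    have hbsum : ∑ i, bdryFlow (starGraph α) (fun _ _ => (1:ℝ)) (𝒜 i)
        = (((𝒜 i0)ᶜ.card : ℝ)) + ∑ i ∈ Finset.univ.erase i0, ((𝒜 i).card : ℝ) := by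
      rw [← Finset.add_sum_erase _ _ (Finset.mem_univ i0), bdryFlow_of_mem _ hin]
      congr 1
      exact Finset.sum_congr rfl fun i hi =>
        bdryFlow_of_not_mem _ (hothers i (Finset.ne_of_mem_erase hi))
    have hkey : ((B:ℝ)+1) * ((((𝒜 i0)ᶜ.card : ℝ)) + ∑ i ∈ Finset.univ.erase i0, ((𝒜 i).card:ℝ))
        ≤ 1 + (4*m+t)*((B:ℝ)+1) := by
      rw [← hbsum, Finset.mul_sum]
      exact le_trans (Finset.sum_le_sum fun i _ => key i) hsum_le
    set R : ℕ := ∑ i ∈ Finset.univ.erase i0, (𝒜 i).card with hR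
    have hRsum : ∑ i ∈ Finset.univ.erase i0, ((𝒜 i).card:ℝ) = (R:ℝ) := by
      rw [hR]; exact (Nat.cast_sum _ _).symm
    have hRge1 : m + t - 1 ≤ R := by
      have h1 : (Finset.univ.erase i0).card • 1 ≤ R :=
        Finset.card_nsmul_le_sum _ _ _ (fun i _ => Finset.card_pos.2 (h𝒜.1 i))
      rwa [Finset.card_erase_of_mem (Finset.mem_univ i0), Finset.card_univ,
        Fintype.card_fin, smul_eq_mul, mul_one] at h1
    have hsplit : (𝒜 i0).card + R = ∑ i, (𝒜 i).card := by
      rw [hR]; exact Finset.add_sum_erase Finset.univ (fun i => (𝒜 i).card) (Finset.mem_univ i0)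
    have hcc : (𝒜 i0)ᶜ.card = 4*m+t+1 - (𝒜 i0).card := by
      rw [Finset.card_compl, hcardV]
    have hs0le : (𝒜 i0).card ≤ 4*m+t+1 := by
      have := Finset.card_le_univ (𝒜 i0); rwa [hcardV] at this
    have hNplus : 4*m+t+1 ≤ (𝒜 i0)ᶜ.card + R := by omega
    have hcast : ((4*m+t+1 : ℕ):ℝ) ≤ (((𝒜 i0)ᶜ.card : ℝ)) + (R:ℝ) := by
      have := (Nat.cast_le (α := ℝ)).2 hNplus
      push_cast at this ⊢; linarith
    rw [hRsum] at hkey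
    have hBr : (1:ℝ) ≤ (B:ℝ) := Nat.one_le_cast.2 hB
    have hmul := mul_le_mul_of_nonneg_left hcast (le_of_lt hB1)
    push_cast at hmul hkey
    nlinarith [hmul, hkey]

  -- Step 2: the union is exactly the set of leaves
  have hUeq : Finset.univ.biUnion 𝒜 = Finset.univ \ {none} := by
    have hsub : Finset.univ.biUnion 𝒜 ⊆ Finset.univ \ {none} := by
      intro v hv
      rw [Finset.mem_biUnion] at hv
      obtain ⟨i, _, hvi⟩ := hv
      rw [Finset.mem_sdiff, Finset.mem_singleton]
      exact ⟨Finset.mem_univ _, fun h => hnone i (h ▸ hvi)⟩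
    have h1 : (Finset.univ \ {none} : Finset (starV m t)).card = 4*m+t := by
      rw [Finset.card_sdiff_of_subset (by simp), Finset.card_univ, hcardV]
      simp
    have h2 : 4*m+t ≤ (Finset.univ.biUnion 𝒜).card := by
      have h3 := Finset.card_sdiff_add_card_eq_card
        (Finset.subset_univ (Finset.univ.biUnion 𝒜))
      rw [Finset.card_univ, hcardV] at h3
      omega
    exact Finset.eq_of_subset_of_card_le hsub (by rw [h1]; exact h2)
  have hcov : ∀ v : starV m t, v ≠ none → ∃ i, v ∈ 𝒜 i := by
    intro v hv
    have hm1 : v ∈ Finset.univ.biUnion 𝒜 := by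
      rw [hUeq, Finset.mem_sdiff, Finset.mem_singleton]
      exact ⟨Finset.mem_univ _, hv⟩
    rw [Finset.mem_biUnion] at hm1
    obtain ⟨i, _, h⟩ := hm1
    exact ⟨i, h⟩
  -- abbreviations
  set a : Fin (m+t) → ℕ := fun i => (XsF m t (𝒜 i)).card with ha
  set b : Fin (m+t) → ℕ := fun i => (YsF m t (𝒜 i)).card with hb
  set c : Fin (m+t) → ℕ := fun i => (ZsF m t (𝒜 i)).card with hc
  set W : Fin (m+t) → ℕ := fun i => ∑ j ∈ XsF m t (𝒜 i), w j with hW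
  -- the three index families are disjoint and cover
  have hXdisj : ∀ i j, i ≠ j → Disjoint (XsF m t (𝒜 i)) (XsF m t (𝒜 j)) := by
    intro i j hij
    rw [Finset.disjoint_left]
    intro k hk1 hk2
    rw [XsF, Finset.mem_filter] at hk1 hk2
    exact Finset.disjoint_left.1 (h𝒜.2 i j hij) hk1.2 hk2.2
  have hYdisj : ∀ i j, i ≠ j → Disjoint (YsF m t (𝒜 i)) (YsF m t (𝒜 j)) := by
    intro i j hij
    rw [Finset.disjoint_left]
    intro k hk1 hk2
    rw [YsF, Finset.mem_filter] at hk1 hk2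
    exact Finset.disjoint_left.1 (h𝒜.2 i j hij) hk1.2 hk2.2
  have hZdisj : ∀ i j, i ≠ j → Disjoint (ZsF m t (𝒜 i)) (ZsF m t (𝒜 j)) := by
    intro i j hij
    rw [Finset.disjoint_left]
    intro k hk1 hk2
    rw [ZsF, Finset.mem_filter] at hk1 hk2
    exact Finset.disjoint_left.1 (h𝒜.2 i j hij) hk1.2 hk2.2
  have hXcover : Finset.univ.biUnion (fun i => XsF m t (𝒜 i)) = Finset.univ := by
    apply Finset.eq_univ_of_forall
    intro k
    obtain ⟨i, hi⟩ := hcov (some (Sum.inl k)) (by simp)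
    exact Finset.mem_biUnion.2 ⟨i, Finset.mem_univ _,
      by rw [XsF, Finset.mem_filter]; exact ⟨Finset.mem_univ _, hi⟩⟩
  have hYcover : Finset.univ.biUnion (fun i => YsF m t (𝒜 i)) = Finset.univ := by
    apply Finset.eq_univ_of_forall
    intro k
    obtain ⟨i, hi⟩ := hcov (some (Sum.inr (Sum.inl k))) (by simp)
    exact Finset.mem_biUnion.2 ⟨i, Finset.mem_univ _,
      by rw [YsF, Finset.mem_filter]; exact ⟨Finset.mem_univ _, hi⟩⟩
  have hZcover : Finset.univ.biUnion (fun i => ZsF m t (𝒜 i)) = Finset.univ := by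
    apply Finset.eq_univ_of_forall
    intro k
    obtain ⟨i, hi⟩ := hcov (some (Sum.inr (Sum.inr k))) (by simp)
    exact Finset.mem_biUnion.2 ⟨i, Finset.mem_univ _,
      by rw [ZsF, Finset.mem_filter]; exact ⟨Finset.mem_univ _, hi⟩⟩
  have hWsumN : ∑ i, W i = m * B := by
    simp only [hW]
    rw [← Finset.sum_biUnion (fun i _ j _ hij => hXdisj i j hij), hXcover, hsum]
  have hasum : ∑ i, a i = 3*m := by
    simp only [ha]
    rw [← Finset.card_biUnion (fun i _ j _ hij => hXdisj i j hij), hXcover,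
      Finset.card_univ, Fintype.card_fin]
  have hbsumN : ∑ i, b i = m := by
    simp only [hb]
    rw [← Finset.card_biUnion (fun i _ j _ hij => hYdisj i j hij), hYcover,
      Finset.card_univ, Fintype.card_fin]
  have hcsum : ∑ i, c i = t := by
    simp only [hc]
    rw [← Finset.card_biUnion (fun i _ j _ hij => hZdisj i j hij), hZcover,
      Finset.card_univ, Fintype.card_fin]
  -- per-part inequality B * b i ≤ W i
  have hkeyN : ∀ i, B * b i ≤ W i := by
    intro i
    have h := key i
    rw [bdryFlow_of_not_mem _ (hnone i)] at h
    have hcard := card_decomp (𝒜 i) (hnone i)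
    have hωdec := sum_decomp (𝒜 i) (hnone i) ω
    have e1 : ∑ j ∈ XsF m t (𝒜 i), ω (some (Sum.inl j))
        = (W i : ℝ) + (a i : ℝ) * ((B:ℝ)+1) := by
      rw [hω]
      simp only [starW]
      rw [Finset.sum_add_distrib, Finset.sum_add_distrib, Finset.sum_const,
        Finset.sum_const]
      simp only [hW, ha]
      push_cast
      ring
    have e2 : ∑ j ∈ YsF m t (𝒜 i), ω (some (Sum.inr (Sum.inl j))) = (b i : ℝ) := by
      rw [hω]
      simp only [starW]
      rw [Finset.sum_const, nsmul_eq_mul, mul_one]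
    have e3 : ∑ l ∈ ZsF m t (𝒜 i), ω (some (Sum.inr (Sum.inr l)))
        = (c i : ℝ) * ((B:ℝ)+1) := by
      rw [hω]
      simp only [starW]
      rw [Finset.sum_const, nsmul_eq_mul]
    rw [hωdec, e1, e2, e3] at h
    have hcardR : ((𝒜 i).card : ℝ) = (a i : ℝ) + (b i : ℝ) + (c i : ℝ) := by
      rw [hcard]
      simp only [ha, hb, hc]
      push_cast
      ring
    rw [hcardR] at h
    have h2 : (B:ℝ) * (b i : ℝ) ≤ ((W i : ℕ):ℝ) := by
      ring_nf at h ⊢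
      linarith [h]
    exact_mod_cast h2
  -- equality forced by summing
  have hsums : ∑ i, B * b i = ∑ i, W i := by
    rw [← Finset.mul_sum, hbsumN, hWsumN, Nat.mul_comm]
  have heq : ∀ i ∈ Finset.univ, B * b i = W i :=
    (Finset.sum_eq_sum_iff_of_le (fun i _ => hkeyN i)).1 hsums
  -- b i = 0 → a i = 0
  have hwpos : ∀ k, 1 ≤ w k := by
    intro k
    have := (hw k).1
    omega
  have hb0 : ∀ i, b i = 0 → a i = 0 := by
    intro i h0
    have hW0 : W i = 0 := by
      have h := heq i (Finset.mem_univ i)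
      rw [h0, Nat.mul_zero] at h
      exact h.symm
    by_contra hne
    have hpos : 0 < (XsF m t (𝒜 i)).card := by
      simp only [ha] at hne
      exact Nat.pos_of_ne_zero hne
    obtain ⟨k, hk⟩ := Finset.card_pos.1 hpos
    have h1 : w k ≤ W i := by
      simp only [hW]
      exact Finset.single_le_sum (fun _ _ => Nat.zero_le _) hk
    have := hwpos k
    omega
  -- b i ≥ 1 → a i ≥ 2 b i + 1
  have hba : ∀ i, 1 ≤ b i → 2 * b i + 1 ≤ a i := by
    intro i h1
    have hWeq := heq i (Finset.mem_univ i)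
    have hXne : (XsF m t (𝒜 i)).Nonempty := by
      rw [Finset.nonempty_iff_ne_empty]
      intro hE
      have hW0 : W i = 0 := by simp only [hW]; rw [hE]; simp
      rw [hW0] at hWeq
      have : 1 ≤ B * b i := Nat.one_le_iff_ne_zero.2 (by positivity)
      omega
    have hlt := Finset.sum_lt_sum_of_nonempty hXne (f := fun j => 2 * w j)
      (g := fun _ => B) (fun j _ => (hw j).2)
    rw [Finset.sum_const, smul_eq_mul] at hlt
    have h2 : 2 * W i < a i * B := by
      calc 2 * W i = ∑ j ∈ XsF m t (𝒜 i), 2 * w j := by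
            simp only [hW]; rw [Finset.mul_sum]
        _ < (XsF m t (𝒜 i)).card * B := hlt
        _ = a i * B := by simp only [ha]
    rw [← hWeq] at h2
    have h3 : (2 * b i) * B < a i * B := by
      calc (2 * b i) * B = 2 * (B * b i) := by ring
        _ < a i * B := h2
    have h4 := Nat.lt_of_mul_lt_mul_right h3
    omega
  -- the set of parts containing a y
  set Y : Finset (Fin (m+t)) := Finset.univ.filter (fun i => 1 ≤ b i) with hY
  have hbY : ∑ i ∈ Y, b i = m := by
    rw [hY]
    rw [Finset.sum_filter_of_ne (fun i _ h => Nat.one_le_iff_ne_zero.2 h)]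
    exact hbsumN
  have hYle : Y.card ≤ m := by
    have h1 : ∑ i ∈ Y, (2 * b i + 1) ≤ ∑ i ∈ Y, a i := by
      refine Finset.sum_le_sum (fun i hi => hba i ?_)
      rw [hY, Finset.mem_filter] at hi
      exact hi.2
    have h2 : ∑ i ∈ Y, a i ≤ 3*m :=
      le_trans (Finset.sum_le_sum_of_subset (Finset.subset_univ _)) (le_of_eq hasum)
    have h3 : ∑ i ∈ Y, (2 * b i + 1) = 2 * m + Y.card := by
      rw [Finset.sum_add_distrib, Finset.sum_const, ← Finset.mul_sum, hbY,
        smul_eq_mul, mul_one]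
    omega
  have hYge : m ≤ Y.card := by
    have h1 : ∀ i ∈ Yᶜ, 1 ≤ c i := by
      intro i hi
      have hbi : b i = 0 := by
        rw [Finset.mem_compl, hY, Finset.mem_filter] at hi
        push_neg at hi
        have := hi (Finset.mem_univ i)
        omega
      have hai := hb0 i hbi
      have hcardi := card_decomp (𝒜 i) (hnone i)
      have hposi := Finset.card_pos.2 (h𝒜.1 i)
      simp only [ha] at hai
      simp only [hb] at hbi
      simp only [hc]
      omega
    have h2 : Yᶜ.card • 1 ≤ ∑ i ∈ Yᶜ, c i := Finset.card_nsmul_le_sum _ _ _ h1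
    rw [smul_eq_mul, mul_one] at h2
    have h3 : ∑ i ∈ Yᶜ, c i ≤ t :=
      le_trans (Finset.sum_le_sum_of_subset (Finset.subset_univ _)) (le_of_eq hcsum)
    have h4 := Finset.card_add_card_compl Y
    rw [Fintype.card_fin] at h4
    omega
  have hYm : Y.card = m := le_antisymm hYle hYge
  have hb1 : ∀ i ∈ Y, b i = 1 := by
    have hs : ∑ i ∈ Y, 1 = ∑ i ∈ Y, b i := by
      rw [hbY, Finset.sum_const, smul_eq_mul, mul_one, hYm]
    have hble : ∀ i ∈ Y, 1 ≤ b i := by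
      intro i hi
      rw [hY, Finset.mem_filter] at hi
      exact hi.2
    intro i hi
    exact ((Finset.sum_eq_sum_iff_of_le hble).1 hs i hi).symm
  -- choose for each j the part containing y_j
  have hcovy : ∀ j : Fin m, ∃ i, some (Sum.inr (Sum.inl j)) ∈ 𝒜 i :=
    fun j => hcov _ (by simp)
  choose part hpart using hcovy
  have hpY : ∀ j, part j ∈ Y := by
    intro j
    rw [hY, Finset.mem_filter]
    refine ⟨Finset.mem_univ _, ?_⟩
    simp only [hb]
    apply Finset.card_pos.2
    refine ⟨j, ?_⟩
    rw [YsF, Finset.mem_filter]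
    exact ⟨Finset.mem_univ _, hpart j⟩
  have hpinj : ∀ j j', part j = part j' → j = j' := by
    intro j j' hpp
    by_contra hne
    have h1 : ({j, j'} : Finset (Fin m)) ⊆ YsF m t (𝒜 (part j)) := by
      intro x hx
      rw [YsF, Finset.mem_filter]
      refine ⟨Finset.mem_univ _, ?_⟩
      rcases Finset.mem_insert.1 hx with rfl | hx
      · exact hpart x
      · rw [Finset.mem_singleton] at hx
        subst hx
        rw [hpp]
        exact hpart x
    have h2 : 2 ≤ b (part j) := by
      simp only [hb]
      calc 2 = ({j, j'} : Finset (Fin m)).card := (Finset.card_pair hne).symm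
        _ ≤ _ := Finset.card_le_card h1
    have := hb1 (part j) (hpY j)
    omega
  refine ⟨fun j => XsF m t (𝒜 (part j)), ?_, ?_, ?_⟩
  · intro j j' hjj
    exact hXdisj _ _ (fun h => hjj (hpinj _ _ h))
  · intro k
    obtain ⟨i0, hi0⟩ := hcov (some (Sum.inl k)) (by simp)
    have hai0 : a i0 ≠ 0 := by
      simp only [ha]
      have : 0 < (XsF m t (𝒜 i0)).card := Finset.card_pos.2
        ⟨k, by rw [XsF, Finset.mem_filter]; exact ⟨Finset.mem_univ _, hi0⟩⟩
      omega
    have hbi0 : 1 ≤ b i0 := by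
      by_contra hcon
      exact hai0 (hb0 i0 (by omega))
    have h1 : b i0 = 1 := hb1 i0 (by rw [hY, Finset.mem_filter]; exact ⟨Finset.mem_univ _, hbi0⟩)
    simp only [hb] at h1
    obtain ⟨j, hj⟩ := Finset.card_eq_one.1 h1
    have hyj : some (Sum.inr (Sum.inl j)) ∈ 𝒜 i0 := by
      have hmem : j ∈ YsF m t (𝒜 i0) := by rw [hj]; exact Finset.mem_singleton_self j
      rw [YsF, Finset.mem_filter] at hmem
      exact hmem.2
    have hpj : part j = i0 := by
      by_contra hne
      exact Finset.disjoint_left.1 (h𝒜.2 (part j) i0 hne) (hpart j) hyj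
    refine ⟨j, ?_⟩
    show k ∈ XsF m t (𝒜 (part j))
    rw [hpj, XsF, Finset.mem_filter]
    exact ⟨Finset.mem_univ _, hi0⟩
  · intro j
    have h1 : b (part j) = 1 := hb1 _ (hpY j)
    have h2 := heq (part j) (Finset.mem_univ _)
    rw [h1, Nat.mul_one] at h2
    simp only [hW] at h2
    exact h2.symm
end
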